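/- Let A be a positive definite Hermitian n×n complex matrix, and let P₁ and P₂ be n×n orthogonal projection matrices (Hermitian idempotents) with P₁·P₂ = 0. Then ‖P₁·A·P₂‖² ≤ ‖P₁·A·P₁‖·‖P₂·A·P₂‖. -/

import Mathlib

open Matrix
open scoped ComplexOrder

/-- The operator (spectral) norm of a matrix, i.e. the norm of the induced operator
between Euclidean spaces. -/
noncomputable def matNorm {m n : Type*} [Fintype m] [Fintype n] [DecidableEq n]
    (M : Matrix m n ℂ) : ℝ :=
  ‖LinearMap.toContinuousLinearMap (Matrix.toEuclideanLin M)‖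

open scoped Matrix.Norms.L2Operator in
lemma matNorm_eq {n : ℕ} (M : Matrix (Fin n) (Fin n) ℂ) : matNorm M = ‖M‖ :=
  (Matrix.l2_opNorm_def M).symm

open scoped Matrix.Norms.L2Operator MatrixOrder in
theorem stmt14 {n : ℕ} (A P₁ P₂ : Matrix (Fin n) (Fin n) ℂ) (hA : A.PosDef)
    (h₁s : P₁ᴴ = P₁) (h₁i : P₁ * P₁ = P₁) (h₂s : P₂ᴴ = P₂) (h₂i : P₂ * P₂ = P₂)
    (h₁₂ : P₁ * P₂ = 0) :
    matNorm (P₁ * A * P₂) ^ 2 ≤ matNorm (P₁ * A * P₁) * matNorm (P₂ * A * P₂) := by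
  simp only [matNorm_eq]
  set S := CFC.sqrt A with hS
  have hSh : Sᴴ = S := (CFC.sqrt_nonneg A).posSemidef.isHermitian
  have hSS : S * S = A := CFC.sqrt_mul_sqrt_self A hA.posSemidef.nonneg
  have key : ∀ (P : Matrix (Fin n) (Fin n) ℂ), Pᴴ = P → ‖S * P‖ ^ 2 = ‖P * A * P‖ := by
    intro P hP
    have : (S * P)ᴴ * (S * P) = P * A * P := by
      rw [conjTranspose_mul, hSh, hP, Matrix.mul_assoc, ← Matrix.mul_assoc S, hSS,
        ← Matrix.mul_assoc]
    rw [← this, Matrix.l2_opNorm_conjTranspose_mul_self, sq]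
  have h12 : P₁ * A * P₂ = (S * P₁)ᴴ * (S * P₂) := by
    rw [conjTranspose_mul, hSh, h₁s, Matrix.mul_assoc P₁ S, ← Matrix.mul_assoc S S, hSS,
      ← Matrix.mul_assoc]
  calc ‖P₁ * A * P₂‖ ^ 2 ≤ (‖(S * P₁)ᴴ‖ * ‖S * P₂‖) ^ 2 := by
        rw [h12]
        exact pow_le_pow_left₀ (norm_nonneg _) (norm_mul_le _ _) 2
    _ = ‖S * P₁‖ ^ 2 * ‖S * P₂‖ ^ 2 := by
        rw [Matrix.l2_opNorm_conjTranspose, mul_pow]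
    _ = ‖P₁ * A * P₁‖ * ‖P₂ * A * P₂‖ := by rw [key P₁ h₁s, key P₂ h₂s]
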